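/- Let c ∈ o(m) and k = m − 1 − 2c, with m = (n−1)(c+1) + 1 and n ≥ 4. There exists a coherent instance of proxy selection with n voters and m proposals, each voter having revealed set of size m − 1, in which for every advertised type of a single dRep the elected proposal has intrinsic score at most 2 while the optimal intrinsic score is n. In particular, for sufficiently large reluctance thresholds the approximation ratio is Ω(n) even on coherent instances. -/
import Mathlib


open Finset

/-- An instance of proxy selection: `intrinsic i j` is voter `i`'s intrinsic approval of
proposal `j`; `visible i j` records whether this preference is revealed to the voter
(the revealed preference is `some (intrinsic i j)` if visible and `⊥` otherwise). -/
structure PSInstance (n m : ℕ) where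
  intrinsic : Fin n → Fin m → Bool
  visible : Fin n → Fin m → Bool

namespace PSInstance

variable {n m : ℕ}

/-- Revealed preference of voter `i` on proposal `j`. -/
def revealed (I : PSInstance n m) (i : Fin n) (j : Fin m) : Option Bool :=
  if I.visible i j then some (I.intrinsic i j) else none

/-- The revealed set `R_i` of voter `i`. -/
def Rset (I : PSInstance n m) (i : Fin n) : Finset (Fin m) :=
  univ.filter fun j => I.visible i j

/-- `m_i = |R_i|`. -/
def mi (I : PSInstance n m) (i : Fin n) : ℕ := (I.Rset i).card

/-- Hamming distance between voter `i`'s revealed ballot and type `t`, restricted to `R_i`. -/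
def dist (I : PSInstance n m) (i : Fin n) (t : Fin m → Bool) : ℕ :=
  (univ.filter fun j => I.visible i j ∧ I.intrinsic i j ≠ t j).card

/-- Voter `i` (with reluctance parameter `k`) is attracted by a dRep of type `t`. -/
def Attracted (I : PSInstance n m) (k : ℕ) (i : Fin n) (t : Fin m → Bool) : Prop :=
  I.dist i t ≤ (I.mi i - k) / 2

instance (I : PSInstance n m) (k : ℕ) (i : Fin n) (t : Fin m → Bool) :
    Decidable (I.Attracted k i t) := by unfold Attracted; exact inferInstance

/-- Intrinsic approval score of proposal `j`. -/
def sc (I : PSInstance n m) (j : Fin m) : ℕ :=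
  (univ.filter fun i => I.intrinsic i j = true).card

/-- Revealed approval score of proposal `j`. -/
def rsc (I : PSInstance n m) (j : Fin m) : ℕ :=
  (univ.filter fun i => I.visible i j ∧ I.intrinsic i j = true).card

/-- `j` is an intrinsically optimal proposal (`win(P)`). -/
def IsOpt (I : PSInstance n m) (j : Fin m) : Prop := ∀ j', I.sc j' ≤ I.sc j

/-- Total score of proposal `j` given a family `D` of dReps and a delegation assignment
`deleg` (delegating voters contribute through their dRep's ballot, the rest vote their
revealed preferences directly). -/
def totalScore {ι : Type} (I : PSInstance n m) (D : ι → Fin m → Bool)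
    (deleg : Fin n → Option ι) (j : Fin m) : ℕ :=
  (univ.filter fun i => (match deleg i with
    | some d => D d j
    | none => I.visible i j && I.intrinsic i j) = true).card

/-- A delegation assignment is valid (w.r.t. per-voter reluctance parameters `k`) if every
delegating voter is attracted by their chosen dRep, and every voter attracted by at least
one dRep delegates (to an arbitrary one of them). -/
def ValidDeleg {ι : Type} (I : PSInstance n m) (k : Fin n → ℕ) (D : ι → Fin m → Bool)
    (deleg : Fin n → Option ι) : Prop :=
  (∀ i d, deleg i = some d → I.Attracted (k i) i (D d)) ∧
  (∀ i, (∃ d, I.Attracted (k i) i (D d)) → deleg i ≠ none)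

/-- `j` is elected: it maximizes total score, ties broken in favor of maximum intrinsic score. -/
def Elected {ι : Type} (I : PSInstance n m) (D : ι → Fin m → Bool)
    (deleg : Fin n → Option ι) (j : Fin m) : Prop :=
  (∀ j', I.totalScore D deleg j' ≤ I.totalScore D deleg j) ∧
  (∀ j', I.totalScore D deleg j' = I.totalScore D deleg j → I.sc j' ≤ I.sc j)

/-- `j` is elected when ties are broken in favor of maximum *revealed* score. -/
def ElectedRev {ι : Type} (I : PSInstance n m) (D : ι → Fin m → Bool)
    (deleg : Fin n → Option ι) (j : Fin m) : Prop :=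
  (∀ j', I.totalScore D deleg j' ≤ I.totalScore D deleg j) ∧
  (∀ j', I.totalScore D deleg j' = I.totalScore D deleg j → I.rsc j' ≤ I.rsc j)

end PSInstance

namespace Stmt7Aux

open Finset PSInstance

/-- The hard instance. -/
def I (n c : ℕ) : PSInstance n ((n - 1) * (c + 1) + 1) where
  intrinsic i j :=
    if (j : ℕ) = (n - 1) * (c + 1) then true
    else if (i : ℕ) = n - 1 then true
    else decide ((j : ℕ) / (c + 1) = (i : ℕ))
  visible _ j := decide ((j : ℕ) ≠ (n - 1) * (c + 1))

lemma card_filter_val (m : ℕ) (p : ℕ → Prop) [DecidablePred p] :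
    (univ.filter fun j : Fin m => p (j : ℕ)).card = ((Finset.Iio m).filter p).card := by
  rw [← Fin.map_valEmbedding_univ, Finset.filter_map, Finset.card_map]
  rfl

lemma vis_iff (n c : ℕ) (i : Fin n) (j : Fin ((n - 1) * (c + 1) + 1)) :
    (I n c).visible i j = true ↔ (j : ℕ) < (n - 1) * (c + 1) := by
  have := j.isLt
  simp only [I, decide_eq_true_eq]
  omega

lemma intr_last (n c : ℕ) (i : Fin n) (hi : (i : ℕ) = n - 1) (j : Fin ((n - 1) * (c + 1) + 1)) :
    (I n c).intrinsic i j = true := by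
  simp [I, hi]

lemma intr_hidden (n c : ℕ) (i : Fin n) :
    (I n c).intrinsic i ⟨(n - 1) * (c + 1), Nat.lt_succ_self _⟩ = true := by
  simp [I]

lemma intr_block (n c : ℕ) (i : Fin n) (hi : (i : ℕ) < n - 1) (j : Fin ((n - 1) * (c + 1) + 1))
    (hj : (j : ℕ) < (n - 1) * (c + 1)) :
    (I n c).intrinsic i j = decide ((j : ℕ) / (c + 1) = (i : ℕ)) := by
  simp only [I]
  rw [if_neg (by omega), if_neg (by omega)]

lemma div_eq_iff (c v x : ℕ) : x / (c + 1) = v ↔ v * (c + 1) ≤ x ∧ x < (v + 1) * (c + 1) := by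
  constructor
  · rintro rfl
    exact ⟨Nat.div_mul_le_self x (c + 1),
      (Nat.div_lt_iff_lt_mul (by omega : 0 < c + 1)).1 (Nat.lt_succ_self _)⟩
  · rintro ⟨h1, h2⟩
    exact Nat.div_eq_of_lt_le h1 h2

lemma card_vis (n c : ℕ) :
    (univ.filter fun j : Fin ((n - 1) * (c + 1) + 1) => (j : ℕ) < (n - 1) * (c + 1)).card
      = (n - 1) * (c + 1) := by
  have hc := card_filter_val ((n - 1) * (c + 1) + 1) (fun x => x < (n - 1) * (c + 1))
  rw [hc]
  have h3 : ((Finset.Iio ((n - 1) * (c + 1) + 1)).filter fun x => x < (n - 1) * (c + 1))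
      = Finset.Iio ((n - 1) * (c + 1)) := by
    ext x; simp only [Finset.mem_filter, Finset.mem_Iio]; omega
  rw [h3, Nat.card_Iio]

lemma mi_eq (n c : ℕ) (i : Fin n) : (I n c).mi i = (n - 1) * (c + 1) := by
  unfold PSInstance.mi PSInstance.Rset
  have h : (univ.filter fun j : Fin ((n - 1) * (c + 1) + 1) => (I n c).visible i j = true)
      = univ.filter fun j : Fin ((n - 1) * (c + 1) + 1) => (j : ℕ) < (n - 1) * (c + 1) := by
    ext j
    simp [vis_iff]
  rw [show (univ.filter fun j : Fin ((n - 1) * (c + 1) + 1) => ((I n c).visible i j : Prop))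
      = univ.filter fun j : Fin ((n - 1) * (c + 1) + 1) => (I n c).visible i j = true from rfl, h]
  exact card_vis n c

lemma card_le_dist_add (n c : ℕ) (t : Fin ((n - 1) * (c + 1) + 1) → Bool) (i i' : Fin n)
    (S : Finset (Fin ((n - 1) * (c + 1) + 1)))
    (hS : ∀ j ∈ S, (I n c).visible i j = true ∧ (I n c).visible i' j = true ∧
      (I n c).intrinsic i j ≠ (I n c).intrinsic i' j) :
    S.card ≤ (I n c).dist i t + (I n c).dist i' t := by
  have h1 : S ⊆ (univ.filter fun j => (I n c).visible i j ∧ (I n c).intrinsic i j ≠ t j)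
      ∪ (univ.filter fun j => (I n c).visible i' j ∧ (I n c).intrinsic i' j ≠ t j) := by
    intro j hj
    obtain ⟨hv, hv', hne⟩ := hS j hj
    simp only [Finset.mem_union, Finset.mem_filter, Finset.mem_univ, true_and]
    by_cases ht : (I n c).intrinsic i j = t j
    · exact Or.inr ⟨hv', fun h => hne (ht.trans h.symm)⟩
    · exact Or.inl ⟨hv, ht⟩
  exact le_trans (Finset.card_le_card h1) (Finset.card_union_le _ _)

lemma dist_add_dist_aux_last (n c : ℕ) (hn : 4 ≤ n) (t : Fin ((n - 1) * (c + 1) + 1) → Bool)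
    (i i' : Fin n) (hi : (i : ℕ) < n - 1) (hi' : (i' : ℕ) = n - 1) :
    2 * c + 2 ≤ (I n c).dist i t + (I n c).dist i' t := by
  set a := (i : ℕ) * (c + 1) with ha
  set b := ((i : ℕ) + 1) * (c + 1) with hb
  have hab : b = a + (c + 1) := by rw [ha, hb]; ring
  have hbN : b ≤ (n - 1) * (c + 1) := Nat.mul_le_mul_right _ (by omega)
  refine le_trans ?_ (card_le_dist_add n c t i i'
    (univ.filter fun j : Fin ((n - 1) * (c + 1) + 1) =>
      (j : ℕ) < (n - 1) * (c + 1) ∧ ¬(a ≤ (j : ℕ) ∧ (j : ℕ) < b)) ?_)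
  · have hc := card_filter_val ((n - 1) * (c + 1) + 1)
      (fun x => x < (n - 1) * (c + 1) ∧ ¬(a ≤ x ∧ x < b))
    rw [hc]
    have heq : ((Finset.Iio ((n - 1) * (c + 1) + 1)).filter
        fun x => x < (n - 1) * (c + 1) ∧ ¬(a ≤ x ∧ x < b))
        = Finset.Iio ((n - 1) * (c + 1)) \ Finset.Ico a b := by
      ext x
      simp only [Finset.mem_filter, Finset.mem_Iio, Finset.mem_sdiff, Finset.mem_Ico]
      omega
    rw [heq, Finset.card_sdiff_of_subset (by
      intro x hx
      simp only [Finset.mem_Ico, Finset.mem_Iio] at *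
      omega), Nat.card_Ico, Nat.card_Iio]
    have h3 : (n - 1) * (c + 1) = (n - 2) * (c + 1) + (c + 1) := by
      rw [show n - 1 = (n - 2) + 1 by omega]; ring
    have h4 : 2 * (c + 1) ≤ (n - 2) * (c + 1) := Nat.mul_le_mul_right _ (by omega)
    omega
  · intro j hj
    simp only [Finset.mem_filter, Finset.mem_univ, true_and] at hj
    obtain ⟨hjN, hjb⟩ := hj
    refine ⟨(vis_iff n c i j).2 hjN, (vis_iff n c i' j).2 hjN, ?_⟩
    rw [intr_block n c i hi j hjN, intr_last n c i' hi' j]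
    simp only [ne_eq, decide_eq_true_eq]
    rw [div_eq_iff]
    omega

lemma dist_add_dist_aux_two (n c : ℕ) (t : Fin ((n - 1) * (c + 1) + 1) → Bool)
    (i i' : Fin n) (hi : (i : ℕ) < n - 1) (hi' : (i' : ℕ) < n - 1) (hne : (i : ℕ) ≠ (i' : ℕ)) :
    2 * c + 2 ≤ (I n c).dist i t + (I n c).dist i' t := by
  set a := (i : ℕ) * (c + 1) with ha
  set b := ((i : ℕ) + 1) * (c + 1) with hb
  set a' := (i' : ℕ) * (c + 1) with ha'
  set b' := ((i' : ℕ) + 1) * (c + 1) with hb'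
  have hab : b = a + (c + 1) := by rw [ha, hb]; ring
  have hab' : b' = a' + (c + 1) := by rw [ha', hb']; ring
  have hbN : b ≤ (n - 1) * (c + 1) := Nat.mul_le_mul_right _ (by omega)
  have hbN' : b' ≤ (n - 1) * (c + 1) := Nat.mul_le_mul_right _ (by omega)
  refine le_trans ?_ (card_le_dist_add n c t i i'
    (univ.filter fun j : Fin ((n - 1) * (c + 1) + 1) =>
      (a ≤ (j : ℕ) ∧ (j : ℕ) < b) ∨ (a' ≤ (j : ℕ) ∧ (j : ℕ) < b')) ?_)
  · have hc := card_filter_val ((n - 1) * (c + 1) + 1)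
      (fun x => (a ≤ x ∧ x < b) ∨ (a' ≤ x ∧ x < b'))
    rw [hc]
    have heq : ((Finset.Iio ((n - 1) * (c + 1) + 1)).filter
        fun x => (a ≤ x ∧ x < b) ∨ (a' ≤ x ∧ x < b'))
        = Finset.Ico a b ∪ Finset.Ico a' b' := by
      ext x
      simp only [Finset.mem_filter, Finset.mem_Iio, Finset.mem_union, Finset.mem_Ico]
      omega
    rw [heq, Finset.card_union_of_disjoint (by
      rw [Finset.disjoint_left]
      intro x hx hx'
      simp only [Finset.mem_Ico] at hx hx'
      have e1 : x / (c + 1) = (i : ℕ) := (div_eq_iff c _ x).2 hx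
      have e2 : x / (c + 1) = (i' : ℕ) := (div_eq_iff c _ x).2 hx'
      omega), Nat.card_Ico, Nat.card_Ico]
    omega
  · intro j hj
    simp only [Finset.mem_filter, Finset.mem_univ, true_and] at hj
    have hjN : (j : ℕ) < (n - 1) * (c + 1) := by
      rcases hj with h | h <;> omega
    refine ⟨(vis_iff n c i j).2 hjN, (vis_iff n c i' j).2 hjN, ?_⟩
    rw [intr_block n c i hi j hjN, intr_block n c i' hi' j hjN]
    simp only [ne_eq, decide_eq_decide]
    rcases hj with h | h
    · have e1 : (j : ℕ) / (c + 1) = (i : ℕ) := (div_eq_iff c _ _).2 h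
      omega
    · have e1 : (j : ℕ) / (c + 1) = (i' : ℕ) := (div_eq_iff c _ _).2 h
      omega

lemma attracted_unique (n c : ℕ) (hn : 4 ≤ n) (t : Fin ((n - 1) * (c + 1) + 1) → Bool)
    (i i' : Fin n) (h : (I n c).dist i t ≤ c) (h' : (I n c).dist i' t ≤ c) : i = i' := by
  by_contra hne
  have hvne : (i : ℕ) ≠ (i' : ℕ) := fun e => hne (Fin.ext e)
  have hkey : 2 * c + 2 ≤ (I n c).dist i t + (I n c).dist i' t := by
    by_cases hi : (i : ℕ) = n - 1
    · by_cases hi' : (i' : ℕ) = n - 1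
      · omega
      · have := dist_add_dist_aux_last n c hn t i' i (by have := i'.isLt; omega) hi
        omega
    · by_cases hi' : (i' : ℕ) = n - 1
      · exact dist_add_dist_aux_last n c hn t i i' (by have := i.isLt; omega) hi'
      · exact dist_add_dist_aux_two n c t i i' (by have := i.isLt; omega)
          (by have := i'.isLt; omega) hvne
  omega

lemma attracted_dist (n c : ℕ) (hn : 4 ≤ n) (i : Fin n) (t : Fin ((n - 1) * (c + 1) + 1) → Bool)
    (h : (I n c).Attracted ((n - 1) * (c + 1) + 1 - 1 - 2 * c) i t) :
    (I n c).dist i t ≤ c := by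
  unfold PSInstance.Attracted at h
  rw [mi_eq] at h
  have hN : 3 * (c + 1) ≤ (n - 1) * (c + 1) := Nat.mul_le_mul_right _ (by omega)
  omega

lemma sc_le_two (n c : ℕ) (hn : 4 ≤ n) (j : Fin ((n - 1) * (c + 1) + 1))
    (hj : (j : ℕ) < (n - 1) * (c + 1)) : (I n c).sc j ≤ 2 := by
  have howner : (j : ℕ) / (c + 1) < n := by
    have h1 : (j : ℕ) / (c + 1) < n - 1 := (Nat.div_lt_iff_lt_mul (by omega : 0 < c + 1)).2 hj
    omega
  have hL : n - 1 < n := by omega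
  have hsub : (univ.filter fun i : Fin n => (I n c).intrinsic i j = true)
      ⊆ {⟨(j : ℕ) / (c + 1), howner⟩, ⟨n - 1, hL⟩} := by
    intro i hi
    simp only [Finset.mem_filter, Finset.mem_univ, true_and] at hi
    simp only [Finset.mem_insert, Finset.mem_singleton]
    by_cases h : (i : ℕ) = n - 1
    · exact Or.inr (Fin.ext h)
    · rw [intr_block n c i (by have := i.isLt; omega) j hj, decide_eq_true_eq] at hi
      exact Or.inl (Fin.ext hi.symm)
  refine le_trans (Finset.card_le_card hsub) (le_trans (Finset.card_insert_le _ _) ?_)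
  simp

lemma two_le_total {n m : ℕ} (J : PSInstance n m) (t : Fin m → Bool)
    (deleg : Fin n → Option Unit) (j : Fin m) (v w : Fin n) (hvw : v ≠ w)
    (hv : (deleg v = none ∧ (J.visible v j && J.intrinsic v j) = true)
        ∨ (deleg v = some () ∧ t j = true))
    (hw : (deleg w = none ∧ (J.visible w j && J.intrinsic w j) = true)
        ∨ (deleg w = some () ∧ t j = true)) :
    2 ≤ J.totalScore (fun _ : Unit => t) deleg j := by
  unfold PSInstance.totalScore
  refine le_trans (le_of_eq (Finset.card_pair hvw).symm) (Finset.card_le_card ?_)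
  intro x hx
  rw [Finset.mem_insert, Finset.mem_singleton] at hx
  rw [Finset.mem_filter]
  refine ⟨Finset.mem_univ _, ?_⟩
  rcases hx with rfl | rfl
  · rcases hv with ⟨h1, h2⟩ | ⟨h1, h2⟩ <;> simp_all
  · rcases hw with ⟨h1, h2⟩ | ⟨h1, h2⟩ <;> simp_all

end Stmt7Aux




/-- For `n ≥ 4`, `m = (n-1)(c+1)+1` and `k = m - 1 - 2c`, there is a coherent
instance with `n` voters and `m` proposals, each voter having revealed set of size `m-1`,
where the optimal intrinsic score is `n` but every single dRep leads to an elected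
proposal of intrinsic score at most 2. -/
theorem stmt7 (n c : ℕ) (hn : 4 ≤ n) :
    ∃ I : PSInstance n ((n - 1) * (c + 1) + 1),
      (∀ i i' : Fin n, I.Rset i = I.Rset i') ∧
      (∀ i, I.mi i = (n - 1) * (c + 1)) ∧
      (∃ j, I.IsOpt j ∧ I.sc j = n) ∧
      ∀ t : Fin ((n - 1) * (c + 1) + 1) → Bool, ∀ deleg : Fin n → Option Unit,
        I.ValidDeleg (fun _ => (n - 1) * (c + 1) + 1 - 1 - 2 * c) (fun _ => t) deleg →
        ∀ j, I.Elected (fun _ => t) deleg j → I.sc j ≤ 2 := by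
  classical
  have hscN : (Stmt7Aux.I n c).sc ⟨(n - 1) * (c + 1), Nat.lt_succ_self _⟩ = n := by
    unfold PSInstance.sc
    rw [Finset.filter_true_of_mem (fun i _ => Stmt7Aux.intr_hidden n c i)]
    simp
  refine ⟨Stmt7Aux.I n c, fun i i' => rfl, fun i => Stmt7Aux.mi_eq n c i, ?_, ?_⟩
  · -- optimal proposal
    refine ⟨⟨(n - 1) * (c + 1), Nat.lt_succ_self _⟩, ?_, hscN⟩
    intro j'
    rw [hscN]
    unfold PSInstance.sc
    refine le_trans (Finset.card_filter_le _ _) ?_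
    simp
  · intro t deleg hvd j hel
    by_cases hj : (j : ℕ) < (n - 1) * (c + 1)
    · exact Stmt7Aux.sc_le_two n c hn j hj
    exfalso
    have hjv : (j : ℕ) = (n - 1) * (c + 1) := by have := j.isLt; omega
    have hjeq : j = ⟨(n - 1) * (c + 1), Nat.lt_succ_self _⟩ := Fin.ext hjv
    subst hjeq
    set S : Finset (Fin n) := univ.filter fun i => deleg i ≠ none with hS
    have hatt : ∀ i ∈ S, (Stmt7Aux.I n c).dist i t ≤ c := by
      intro i hi
      rw [hS, Finset.mem_filter] at hi
      obtain ⟨u, hu⟩ := Option.ne_none_iff_exists'.1 hi.2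
      exact Stmt7Aux.attracted_dist n c hn i t (hvd.1 i u hu)
    have hone : ∀ a ∈ S, ∀ b ∈ S, a = b := fun a ha b hb =>
      Stmt7Aux.attracted_unique n c hn t a b (hatt a ha) (hatt b hb)
    -- total score of the hidden proposal is at most 1
    have hlast : (Stmt7Aux.I n c).totalScore (fun _ => t) deleg
        ⟨(n - 1) * (c + 1), Nat.lt_succ_self _⟩ ≤ 1 := by
      unfold PSInstance.totalScore
      refine le_trans (Finset.card_le_card ?_) (Finset.card_le_one.2 hone)
      intro i hi
      rw [Finset.mem_filter] at hi
      rw [hS, Finset.mem_filter]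
      refine ⟨Finset.mem_univ _, ?_⟩
      intro hnone
      have hv : (Stmt7Aux.I n c).visible i ⟨(n - 1) * (c + 1), Nat.lt_succ_self _⟩ = false := by
        simp [Stmt7Aux.I]
      rw [hnone] at hi
      simp only [hv] at hi
      simp at hi
    -- a proposal with total score at least 2
    set vL : Fin n := ⟨n - 1, by omega⟩ with hvL
    have hmain : ∃ j₀, 2 ≤ (Stmt7Aux.I n c).totalScore (fun _ => t) deleg j₀ := by
      by_cases hL : vL ∈ S
      · -- the last voter delegates; everyone else votes directly
        obtain ⟨u, hu0⟩ := Option.ne_none_iff_exists'.1 ((Finset.mem_filter.1 hL).2)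
        have hu : deleg vL = some () := by cases u; exact hu0
        have hdL : (Stmt7Aux.I n c).dist vL t ≤ c :=
          Stmt7Aux.attracted_dist n c hn vL t (hvd.1 vL () hu)
        -- find a visible proposal approved by t
        have hNA : (n - 1) * (c + 1) ≤
            (univ.filter fun j : Fin ((n - 1) * (c + 1) + 1) =>
              (j : ℕ) < (n - 1) * (c + 1) ∧ t j = true).card + c := by
          have hsub2 : (univ.filter fun j : Fin ((n - 1) * (c + 1) + 1) =>
              (j : ℕ) < (n - 1) * (c + 1))
              ⊆ (univ.filter fun j : Fin ((n - 1) * (c + 1) + 1) =>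
                  (j : ℕ) < (n - 1) * (c + 1) ∧ t j = true)
                ∪ (univ.filter fun j =>
                  (Stmt7Aux.I n c).visible vL j ∧ (Stmt7Aux.I n c).intrinsic vL j ≠ t j) := by
            intro x hx
            rw [Finset.mem_filter] at hx
            simp only [Finset.mem_union, Finset.mem_filter, Finset.mem_univ, true_and]
            by_cases ht : t x = true
            · exact Or.inl ⟨hx.2, ht⟩
            · refine Or.inr ⟨(Stmt7Aux.vis_iff n c vL x).2 hx.2, ?_⟩
              rw [Stmt7Aux.intr_last n c vL rfl x]
              exact fun h => ht h.symm
          have h1 := le_trans (Finset.card_le_card hsub2) (Finset.card_union_le _ _)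
          have h2 := Stmt7Aux.card_vis n c
          unfold PSInstance.dist at hdL
          omega
        have hNpos : 3 * (c + 1) ≤ (n - 1) * (c + 1) := Nat.mul_le_mul_right _ (by omega)
        have hne : (univ.filter fun j : Fin ((n - 1) * (c + 1) + 1) =>
            (j : ℕ) < (n - 1) * (c + 1) ∧ t j = true).Nonempty := by
          rw [← Finset.card_pos]
          omega
        obtain ⟨j₀, hj₀⟩ := hne
        rw [Finset.mem_filter] at hj₀
        obtain ⟨-, hj₀N, hj₀t⟩ := hj₀
        have howner : (j₀ : ℕ) / (c + 1) < n - 1 :=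
          (Nat.div_lt_iff_lt_mul (by omega : 0 < c + 1)).2 hj₀N
        set w : Fin n := ⟨(j₀ : ℕ) / (c + 1), by omega⟩ with hw
        have hwne : w ≠ vL := by
          intro h
          have := Fin.val_eq_of_eq h
          rw [hw, hvL] at this
          simp only at this
          omega
        have hwS : w ∉ S := fun hwS => hwne (hone w hwS vL hL)
        have hdw : deleg w = none := by
          by_contra hnone
          exact hwS (Finset.mem_filter.2 ⟨Finset.mem_univ _, hnone⟩)
        refine ⟨j₀, Stmt7Aux.two_le_total (Stmt7Aux.I n c) t deleg j₀ w vL hwne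
          (Or.inl ⟨hdw, ?_⟩) (Or.inr ⟨hu, hj₀t⟩)⟩
        rw [Bool.and_eq_true]
        refine ⟨(Stmt7Aux.vis_iff n c w j₀).2 hj₀N, ?_⟩
        rw [Stmt7Aux.intr_block n c w (by rw [hw]; exact howner) j₀ hj₀N]
        simp [hw]
      · -- the last voter does not delegate
        have h01 : ∃ w : Fin n, (w : ℕ) < n - 1 ∧ w ∉ S := by
          by_cases h0 : (⟨0, by omega⟩ : Fin n) ∈ S
          · refine ⟨⟨1, by omega⟩, by simp; omega, fun h1 => ?_⟩
            have h2 := hone _ h0 _ h1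
            have h3 := Fin.val_eq_of_eq h2
            simp only at h3
            omega
          · exact ⟨⟨0, by omega⟩, by simp; omega, h0⟩
        obtain ⟨w, hwlt, hwS⟩ := h01
        have hdw : deleg w = none := by
          by_contra hnone
          exact hwS (Finset.mem_filter.2 ⟨Finset.mem_univ _, hnone⟩)
        have hdL : deleg vL = none := by
          by_contra hnone
          exact hL (Finset.mem_filter.2 ⟨Finset.mem_univ _, hnone⟩)
        have hmul : ((w : ℕ) + 1) * (c + 1) = (w : ℕ) * (c + 1) + (c + 1) := by ring
        have hble : ((w : ℕ) + 1) * (c + 1) ≤ (n - 1) * (c + 1) :=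
          Nat.mul_le_mul_right _ (by omega)
        have hj₀lt : (w : ℕ) * (c + 1) < (n - 1) * (c + 1) := by omega
        set j₀ : Fin ((n - 1) * (c + 1) + 1) := ⟨(w : ℕ) * (c + 1), by omega⟩ with hj₀
        have hwne : w ≠ vL := by
          intro h
          have := Fin.val_eq_of_eq h
          rw [hvL] at this
          simp only at this
          omega
        have hdiv : (j₀ : ℕ) / (c + 1) = (w : ℕ) := by
          rw [Stmt7Aux.div_eq_iff]
          refine ⟨le_refl _, ?_⟩
          rw [hmul]
          simp [hj₀]
        refine ⟨j₀, Stmt7Aux.two_le_total (Stmt7Aux.I n c) t deleg j₀ w vL hwne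
          (Or.inl ⟨hdw, ?_⟩) (Or.inl ⟨hdL, ?_⟩)⟩
        · rw [Bool.and_eq_true]
          refine ⟨(Stmt7Aux.vis_iff n c w j₀).2 hj₀lt, ?_⟩
          rw [Stmt7Aux.intr_block n c w (by omega) j₀ hj₀lt]
          simp [hdiv]
        · rw [Bool.and_eq_true]
          exact ⟨(Stmt7Aux.vis_iff n c vL j₀).2 hj₀lt, Stmt7Aux.intr_last n c vL rfl j₀⟩
    obtain ⟨j₀, hj₀⟩ := hmain
    have hle := hel.1 j₀
    omega
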